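/- Let ρ(x) be the tripartite family defined by ρ(x) = (1/(2√2))·Λ₀₀₀ + x·(Λ₀₃₁ + Λ₀₃₃ + Λ₁₀₃ + Λ₁₁₁ + Λ₁₃₃ + Λ₃₀₃ + Λ₃₁₀ + Λ₃₁₃ + Λ₃₃₀ + Λ₃₃₁ − Λ₀₁₁ − Λ₀₁₃ − Λ₁₀₁ − Λ₁₁₀ − Λ₁₃₀ − Λ₃₀₁), with x real. Then ρ(x) is Hermitian with trace 1, tr(ρ(x)²) = 1/8 + 16x², its eigenvalues are 1/8 + √2·x and 1/8 − √2·x, each with multiplicity 4, and ρ(x) is positive semidefinite if and only if −1/(8√2) ≤ x ≤ 1/(8√2). Moreover all three partial transposes of ρ(x) equal ρ(x), so ρ(x) is PPT on the whole parameter range. -/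

import Mathlib

open Matrix Kronecker ComplexOrder Polynomial

noncomputable def lam : Fin 4 → Matrix (Fin 2) (Fin 2) ℂ
  | 0 => ((Real.sqrt 2 : ℂ))⁻¹ • !![1, 0; 0, 1]
  | 1 => ((Real.sqrt 2 : ℂ))⁻¹ • !![0, 1; 1, 0]
  | 2 => ((Real.sqrt 2 : ℂ))⁻¹ • !![0, -Complex.I; Complex.I, 0]
  | 3 => ((Real.sqrt 2 : ℂ))⁻¹ • !![1, 0; 0, -1]

/-- `Λ_{jkl} = λ_j ⊗ λ_k ⊗ λ_l`. -/
noncomputable def Lam3 (j k l : Fin 4) :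
    Matrix (Fin 2 × Fin 2 × Fin 2) (Fin 2 × Fin 2 × Fin 2) ℂ :=
  lam j ⊗ₖ (lam k ⊗ₖ lam l)

/-- Partial transpose on the first qubit. -/
def PT1 (ρ : Matrix (Fin 2 × Fin 2 × Fin 2) (Fin 2 × Fin 2 × Fin 2) ℂ) :
    Matrix (Fin 2 × Fin 2 × Fin 2) (Fin 2 × Fin 2 × Fin 2) ℂ :=
  Matrix.of fun p q => ρ (q.1, p.2) (p.1, q.2)

/-- Partial transpose on the second qubit. -/
def PT2 (ρ : Matrix (Fin 2 × Fin 2 × Fin 2) (Fin 2 × Fin 2 × Fin 2) ℂ) :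
    Matrix (Fin 2 × Fin 2 × Fin 2) (Fin 2 × Fin 2 × Fin 2) ℂ :=
  Matrix.of fun p q => ρ (p.1, q.2.1, p.2.2) (q.1, p.2.1, q.2.2)

/-- Partial transpose on the third qubit. -/
def PT3 (ρ : Matrix (Fin 2 × Fin 2 × Fin 2) (Fin 2 × Fin 2 × Fin 2) ℂ) :
    Matrix (Fin 2 × Fin 2 × Fin 2) (Fin 2 × Fin 2 × Fin 2) ℂ :=
  Matrix.of fun p q => ρ (p.1, p.2.1, q.2.2) (q.1, q.2.1, p.2.2)

/-- The biseparable tripartite family of Section V of the paper. -/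
noncomputable def rhoBisep (x : ℝ) :
    Matrix (Fin 2 × Fin 2 × Fin 2) (Fin 2 × Fin 2 × Fin 2) ℂ :=
  ((1 / (2 * Real.sqrt 2) : ℝ) : ℂ) • Lam3 0 0 0 +
    (x : ℂ) • (Lam3 0 3 1 + Lam3 0 3 3 + Lam3 1 0 3 + Lam3 1 1 1 + Lam3 1 3 3 +
      Lam3 3 0 3 + Lam3 3 1 0 + Lam3 3 1 3 + Lam3 3 3 0 + Lam3 3 3 1 -
      Lam3 0 1 1 - Lam3 0 1 3 - Lam3 1 0 1 - Lam3 1 1 0 - Lam3 1 3 0 - Lam3 3 0 1)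


abbrev Q8 := Fin 2 × Fin 2 × Fin 2

def eQ : Q8 → Fin 8 := fun p =>
  ⟨4 * p.1.1 + 2 * p.2.1.1 + p.2.2.1, by
    have := p.1.isLt; have := p.2.1.isLt; have := p.2.2.isLt; omega⟩

def M8 : Matrix (Fin 8) (Fin 8) ℤ :=
  !![3, 1, 1, -1, 1, -1, -1, 1;
     1, -1, -1, 1, -1, -3, 1, -1;
     1, -1, -1, -3, -1, 1, 1, -1;
     -1, 1, -3, -1, 1, -1, -1, 1;
     1, -1, -1, 1, -1, 1, -3, -1;
     -1, -3, 1, -1, 1, -1, -1, 1;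
     -1, 1, 1, -1, -3, -1, -1, 1;
     1, -1, -1, 1, -1, 1, 1, 3]

def Mz : Matrix Q8 Q8 ℤ := Matrix.of fun p q => M8 (eQ p) (eQ q)

noncomputable def Mc : Matrix Q8 Q8 ℂ := Mz.map (Int.cast)

noncomputable def sC : ℂ := ((Real.sqrt 2 : ℝ) : ℂ)

lemma sC_sq : sC ^ 2 = 2 := by
  rw [sC, ← Complex.ofReal_pow, Real.sq_sqrt (by norm_num : (0:ℝ) ≤ 2)]; norm_num

lemma sC_ne : sC ≠ 0 := by
  rw [sC, ne_eq, Complex.ofReal_eq_zero]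
  positivity

def p0z : Matrix (Fin 2) (Fin 2) ℤ := !![1, 0; 0, 1]
def p1z : Matrix (Fin 2) (Fin 2) ℤ := !![0, 1; 1, 0]
def p3z : Matrix (Fin 2) (Fin 2) ℤ := !![1, 0; 0, -1]

noncomputable def P0 : Matrix (Fin 2) (Fin 2) ℂ := p0z.map Int.cast
noncomputable def P1 : Matrix (Fin 2) (Fin 2) ℂ := p1z.map Int.cast
noncomputable def P3 : Matrix (Fin 2) (Fin 2) ℂ := p3z.map Int.cast

lemma P0_eq : P0 = !![1, 0; 0, 1] := by
  ext i j; fin_cases i <;> fin_cases j <;> simp [P0, p0z]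
lemma P1_eq : P1 = !![0, 1; 1, 0] := by
  ext i j; fin_cases i <;> fin_cases j <;> simp [P1, p1z]
lemma P3_eq : P3 = !![1, 0; 0, -1] := by
  ext i j; fin_cases i <;> fin_cases j <;> simp [P3, p3z]

lemma sinv : ((Real.sqrt 2 : ℂ))⁻¹ = sC / 2 := by
  have h2 : sC * sC = 2 := by have := sC_sq; rwa [sq] at this
  rw [show ((Real.sqrt 2 : ℝ) : ℂ) = sC from rfl]
  rw [eq_div_iff (by norm_num : (2:ℂ) ≠ 0), inv_mul_eq_iff_eq_mul₀ sC_ne]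
  linear_combination (-1 : ℂ) * h2

lemma lam0 : lam 0 = (sC / 2) • P0 := by rw [lam, sinv, P0_eq]
lemma lam1 : lam 1 = (sC / 2) • P1 := by rw [lam, sinv, P1_eq]
lemma lam3 : lam 3 = (sC / 2) • P3 := by rw [lam, sinv, P3_eq]

lemma kron3 (A B C₂ : Matrix (Fin 2) (Fin 2) ℂ) :
    ((sC/2) • A) ⊗ₖ (((sC/2) • B) ⊗ₖ ((sC/2) • C₂)) = (sC/4) • (A ⊗ₖ (B ⊗ₖ C₂)) := by
  simp only [smul_kronecker, kronecker_smul, smul_smul]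
  congr 1
  have h2 := sC_sq
  field_simp
  linear_combination (4 * sC) * h2

noncomputable def Ksum : Matrix Q8 Q8 ℂ :=
  P0 ⊗ₖ (P3 ⊗ₖ P1) + P0 ⊗ₖ (P3 ⊗ₖ P3) + P1 ⊗ₖ (P0 ⊗ₖ P3) + P1 ⊗ₖ (P1 ⊗ₖ P1) +
  P1 ⊗ₖ (P3 ⊗ₖ P3) + P3 ⊗ₖ (P0 ⊗ₖ P3) + P3 ⊗ₖ (P1 ⊗ₖ P0) + P3 ⊗ₖ (P1 ⊗ₖ P3) +
  P3 ⊗ₖ (P3 ⊗ₖ P0) + P3 ⊗ₖ (P3 ⊗ₖ P1) - P0 ⊗ₖ (P1 ⊗ₖ P1) - P0 ⊗ₖ (P1 ⊗ₖ P3) -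
  P1 ⊗ₖ (P0 ⊗ₖ P1) - P1 ⊗ₖ (P1 ⊗ₖ P0) - P1 ⊗ₖ (P3 ⊗ₖ P0) - P3 ⊗ₖ (P0 ⊗ₖ P1)

def Kz : Matrix Q8 Q8 ℤ :=
  p0z ⊗ₖ (p3z ⊗ₖ p1z) + p0z ⊗ₖ (p3z ⊗ₖ p3z) + p1z ⊗ₖ (p0z ⊗ₖ p3z) + p1z ⊗ₖ (p1z ⊗ₖ p1z) +
  p1z ⊗ₖ (p3z ⊗ₖ p3z) + p3z ⊗ₖ (p0z ⊗ₖ p3z) + p3z ⊗ₖ (p1z ⊗ₖ p0z) + p3z ⊗ₖ (p1z ⊗ₖ p3z) +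
  p3z ⊗ₖ (p3z ⊗ₖ p0z) + p3z ⊗ₖ (p3z ⊗ₖ p1z) - p0z ⊗ₖ (p1z ⊗ₖ p1z) - p0z ⊗ₖ (p1z ⊗ₖ p3z) -
  p1z ⊗ₖ (p0z ⊗ₖ p1z) - p1z ⊗ₖ (p1z ⊗ₖ p0z) - p1z ⊗ₖ (p3z ⊗ₖ p0z) - p3z ⊗ₖ (p0z ⊗ₖ p1z)

lemma Ksum_eq : Ksum = Mc := by
  have h : Kz = Mz := by decide
  ext p q
  have h' := congrFun (congrFun h p) q
  simp only [Ksum, Kz, Mc, Mz, P0, P1, P3, Matrix.map_apply, Matrix.add_apply, Matrix.sub_apply,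
    Matrix.kroneckerMap_apply, Matrix.of_apply] at h' ⊢
  rw [← h']
  push_cast
  ring

lemma rep (x : ℝ) :
    rhoBisep x = ((1:ℂ)/8) • (1 : Matrix Q8 Q8 ℂ) + (sC * x / 4) • Mc := by
  have h1 : Lam3 0 0 0 = (sC/4) • (1 : Matrix Q8 Q8 ℂ) := by
    rw [Lam3, lam0, kron3, P0_eq, ← Matrix.one_fin_two, Matrix.one_kronecker_one,
      Matrix.one_kronecker_one]
  rw [rhoBisep, h1]
  rw [show Lam3 0 3 1 = (sC/4) • (P0 ⊗ₖ (P3 ⊗ₖ P1)) by rw [Lam3, lam0, lam3, lam1, kron3],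
      show Lam3 0 3 3 = (sC/4) • (P0 ⊗ₖ (P3 ⊗ₖ P3)) by rw [Lam3, lam0, lam3, kron3],
      show Lam3 1 0 3 = (sC/4) • (P1 ⊗ₖ (P0 ⊗ₖ P3)) by rw [Lam3, lam1, lam0, lam3, kron3],
      show Lam3 1 1 1 = (sC/4) • (P1 ⊗ₖ (P1 ⊗ₖ P1)) by rw [Lam3, lam1, kron3],
      show Lam3 1 3 3 = (sC/4) • (P1 ⊗ₖ (P3 ⊗ₖ P3)) by rw [Lam3, lam1, lam3, kron3],
      show Lam3 3 0 3 = (sC/4) • (P3 ⊗ₖ (P0 ⊗ₖ P3)) by rw [Lam3, lam3, lam0, kron3],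
      show Lam3 3 1 0 = (sC/4) • (P3 ⊗ₖ (P1 ⊗ₖ P0)) by rw [Lam3, lam3, lam1, lam0, kron3],
      show Lam3 3 1 3 = (sC/4) • (P3 ⊗ₖ (P1 ⊗ₖ P3)) by rw [Lam3, lam3, lam1, kron3],
      show Lam3 3 3 0 = (sC/4) • (P3 ⊗ₖ (P3 ⊗ₖ P0)) by rw [Lam3, lam3, lam0, kron3],
      show Lam3 3 3 1 = (sC/4) • (P3 ⊗ₖ (P3 ⊗ₖ P1)) by rw [Lam3, lam3, lam1, kron3],
      show Lam3 0 1 1 = (sC/4) • (P0 ⊗ₖ (P1 ⊗ₖ P1)) by rw [Lam3, lam0, lam1, kron3],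
      show Lam3 0 1 3 = (sC/4) • (P0 ⊗ₖ (P1 ⊗ₖ P3)) by rw [Lam3, lam0, lam1, lam3, kron3],
      show Lam3 1 0 1 = (sC/4) • (P1 ⊗ₖ (P0 ⊗ₖ P1)) by rw [Lam3, lam1, lam0, kron3],
      show Lam3 1 1 0 = (sC/4) • (P1 ⊗ₖ (P1 ⊗ₖ P0)) by rw [Lam3, lam1, lam0, kron3],
      show Lam3 1 3 0 = (sC/4) • (P1 ⊗ₖ (P3 ⊗ₖ P0)) by rw [Lam3, lam1, lam3, lam0, kron3],
      show Lam3 3 0 1 = (sC/4) • (P3 ⊗ₖ (P0 ⊗ₖ P1)) by rw [Lam3, lam3, lam0, lam1, kron3]]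
  rw [← Ksum_eq]
  rw [show ((1 / (2 * Real.sqrt 2) : ℝ) : ℂ) = 1 / (2 * sC) by push_cast [sC]; ring]
  simp only [← smul_add, ← smul_sub, smul_smul, Ksum]
  congr 1
  · congr 1
    field_simp [sC_ne]
    ring
  · congr 1
    ring

lemma hM2 : Mc * Mc = (16 : ℂ) • 1 := by
  have h : Mz * Mz = Matrix.diagonal (fun _ => (16:ℤ)) := by decide
  ext p q
  have h' := congrFun (congrFun h p) q
  rw [Matrix.mul_apply] at h'
  have lhs : (Mc * Mc) p q = ((∑ j, Mz p j * Mz j q : ℤ) : ℂ) := by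
    rw [Matrix.mul_apply, Int.cast_sum]
    simp [Mc, Matrix.map_apply]
  rw [lhs, h']
  by_cases hpq : p = q <;>
    simp [Matrix.diagonal_apply, Matrix.one_apply, hpq, Matrix.smul_apply]

lemma hMcH : Mcᴴ = Mc := by
  have h : Mzᵀ = Mz := by decide
  ext p q
  have h' := congrFun (congrFun h p) q
  simp only [Matrix.transpose_apply] at h'
  simp [Mc, Matrix.conjTranspose_apply, Matrix.map_apply, h']

lemma hMtr : Mc.trace = 0 := by
  have h : Mz.trace = 0 := by decide
  simp only [Matrix.trace, Matrix.diag, Mc, Matrix.map_apply]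
  rw [← Int.cast_sum]
  rw [show ∑ p : Q8, Mz p p = Mz.trace from rfl, h, Int.cast_zero]

lemma herm (x : ℝ) : (rhoBisep x).IsHermitian := by
  rw [Matrix.IsHermitian, rep]
  rw [Matrix.conjTranspose_add, Matrix.conjTranspose_smul, Matrix.conjTranspose_smul,
    Matrix.conjTranspose_one, hMcH]
  congr 1
  · congr 1
    simp [Complex.ext_iff]
  · congr 1
    simp [sC, Complex.ext_iff, mul_comm]

lemma tr1 (x : ℝ) : (rhoBisep x).trace = 1 := by
  rw [rep, Matrix.trace_add, Matrix.trace_smul, Matrix.trace_smul, hMtr, Matrix.trace_one]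
  simp

lemma tr2 (x : ℝ) :
    (rhoBisep x * rhoBisep x).trace = 1 / 8 + (16 : ℂ) * (x : ℂ) ^ 2 := by
  rw [rep]
  have expand : (((1:ℂ)/8) • (1 : Matrix Q8 Q8 ℂ) + (sC * x / 4) • Mc) *
      (((1:ℂ)/8) • (1 : Matrix Q8 Q8 ℂ) + (sC * x / 4) • Mc) =
      (((1:ℂ)/8) * ((1:ℂ)/8) + (sC * x / 4) * (sC * x / 4) * 16) • (1 : Matrix Q8 Q8 ℂ) +
      (2 * ((1:ℂ)/8) * (sC * x / 4)) • Mc := by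
    simp only [Matrix.add_mul, Matrix.mul_add, Matrix.smul_mul, Matrix.mul_smul, Matrix.one_mul,
      Matrix.mul_one, hM2]
    module
  rw [expand, Matrix.trace_add, Matrix.trace_smul, Matrix.trace_smul, hMtr, Matrix.trace_one]
  have h2 := sC_sq
  simp only [smul_zero, add_zero, smul_eq_mul]
  rw [show (Fintype.card Q8 : ℂ) = 8 by simp]
  linear_combination (8 * (x:ℂ)^2 / 16 * 16) * h2

lemma Mc_cast (p q : Q8) : Mc p q = ((Mz p q : ℤ) : ℂ) := rfl

lemma pt1_rho (x : ℝ) : PT1 (rhoBisep x) = rhoBisep x := by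
  have hMz : ∀ p q : Q8, Mz (q.1, p.2) (p.1, q.2) = Mz p q := by
    intro p q; fin_cases p <;> fin_cases q <;> decide
  ext p q
  rw [rep]
  simp only [PT1, Matrix.of_apply, Matrix.add_apply, Matrix.smul_apply, Mc_cast, hMz]
  congr 2
  by_cases h : p = q <;> simp [Matrix.one_apply, Prod.ext_iff, h] <;>
    (try tauto) <;> (intro h1 h2 h3; exact h (Prod.ext h1.symm (Prod.ext h2 h3)))

lemma pt2_rho (x : ℝ) : PT2 (rhoBisep x) = rhoBisep x := by
  have hMz : ∀ p q : Q8, Mz (p.1, q.2.1, p.2.2) (q.1, p.2.1, q.2.2) = Mz p q := by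
    intro p q; fin_cases p <;> fin_cases q <;> decide
  ext p q
  rw [rep]
  simp only [PT2, Matrix.of_apply, Matrix.add_apply, Matrix.smul_apply, Mc_cast, hMz]
  congr 2
  by_cases h : p = q <;> simp [Matrix.one_apply, Prod.ext_iff, h] <;>
    (try tauto) <;> (intro h1 h2 h3; exact h (Prod.ext h1 (Prod.ext h2.symm h3)))

lemma pt3_rho (x : ℝ) : PT3 (rhoBisep x) = rhoBisep x := by
  have hMz : ∀ p q : Q8, Mz (p.1, p.2.1, q.2.2) (q.1, q.2.1, p.2.2) = Mz p q := by
    intro p q; fin_cases p <;> fin_cases q <;> decide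
  ext p q
  rw [rep]
  simp only [PT3, Matrix.of_apply, Matrix.add_apply, Matrix.smul_apply, Mc_cast, hMz]
  congr 2
  by_cases h : p = q <;> simp [Matrix.one_apply, Prod.ext_iff, h] <;>
    (try tauto) <;> (intro h1 h2 h3; exact h (Prod.ext h1 (Prod.ext h2 h3.symm)))

def U8 : Matrix (Fin 8) (Fin 8) ℤ :=
  !![-1, -1, -1, -1, -1, 0, 0, 0;
     -1, -1, -1, 0, 1, -1, -1, -1;
     -1, 0, 0, -1, 1, -1, -1, 0;
     1, 0, 0, 1, -1, -1, -1, 0;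
     1, 0, 1, 0, 1, -1, 0, -1;
     1, 1, 1, 0, -1, -1, -1, -1;
     -1, 0, -1, 0, -1, -1, 0, -1;
     1, 1, -1, 1, 1, 0, 0, 0]

def W8 : Matrix (Fin 8) (Fin 8) ℤ :=
  !![5, -1, -1, 1, 3, 1, -3, 3;
     -2, -2, 2, -2, -2, 2, 2, 2;
     -4, 0, 0, 0, 0, 0, 0, -4;
     -6, 2, -2, 2, -2, -2, 2, -2;
     -1, 1, 1, -1, 1, -1, -1, 1;
     0, 4, -4, -4, -4, 4, -4, 0;
     0, -4, 0, 0, 4, -4, 4, 0;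
     0, -4, 4, 4, 0, -4, 0, 0]

def Uz : Matrix Q8 Q8 ℤ := Matrix.of fun p q => U8 (eQ p) (eQ q)
def Wz : Matrix Q8 Q8 ℤ := Matrix.of fun p q => W8 (eQ p) (eQ q)
def dz : Q8 → ℤ := fun p => if (eQ p : Fin 8).val < 4 then 4 else -4

lemma map_mul' (A B : Matrix Q8 Q8 ℤ) :
    (A * B).map (Int.cast : ℤ → ℂ) = A.map Int.cast * B.map Int.cast := by
  ext p q
  rw [Matrix.map_apply, Matrix.mul_apply, Matrix.mul_apply, Int.cast_sum]
  simp [Matrix.map_apply]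

noncomputable def Uc : Matrix Q8 Q8 ℂ := Uz.map Int.cast
noncomputable def Wc : Matrix Q8 Q8 ℂ := ((8:ℂ)⁻¹) • Wz.map Int.cast

lemma hUW : Uc * Wc = 1 := by
  have h : Uz * Wz = Matrix.diagonal (fun _ => (8:ℤ)) := by decide
  rw [Uc, Wc, Matrix.mul_smul, ← map_mul', h]
  rw [Matrix.diagonal_map (by simp)]
  ext p q
  by_cases hpq : p = q <;>
    simp [Matrix.diagonal_apply, Matrix.one_apply, hpq, Matrix.smul_apply]

lemma hWU : Wc * Uc = 1 := by
  have h : Wz * Uz = Matrix.diagonal (fun _ => (8:ℤ)) := by decide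
  rw [Uc, Wc, Matrix.smul_mul, ← map_mul', h]
  rw [Matrix.diagonal_map (by simp)]
  ext p q
  by_cases hpq : p = q <;>
    simp [Matrix.diagonal_apply, Matrix.one_apply, hpq, Matrix.smul_apply]

lemma hMU : Mc * Uc = Uc * Matrix.diagonal (fun p => ((dz p : ℤ) : ℂ)) := by
  have h : Mz * Uz = Uz * Matrix.diagonal dz := by decide
  rw [Mc, Uc, ← map_mul', h, map_mul', Matrix.diagonal_map (by simp)]

lemma map_mulC {n : Type*} [Fintype n] (A B : Matrix n n ℂ) :
    (A * B).map (C : ℂ → ℂ[X]) = A.map C * B.map C := by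
  ext p q
  rw [Matrix.map_apply, Matrix.mul_apply, Matrix.mul_apply, map_sum]
  simp [Matrix.map_apply]

lemma charpoly_conj {n : Type*} [Fintype n] [DecidableEq n] (U D V : Matrix n n ℂ) (h1 : U * V = 1) :
    (U * D * V).charpoly = D.charpoly := by
  unfold Matrix.charpoly
  have hone : (1 : Matrix n n ℂ).map (C : ℂ → ℂ[X]) = 1 :=
    Matrix.map_one _ (map_zero C) (map_one C)
  have hUV : U.map (C : ℂ → ℂ[X]) * V.map C = 1 := by
    rw [← map_mulC, h1, hone]
  have hmap : charmatrix (U * D * V) = U.map C * charmatrix D * V.map C := by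
    unfold charmatrix
    rw [RingHom.mapMatrix_apply, RingHom.mapMatrix_apply]
    rw [show ((U * D * V).map (C : ℂ → ℂ[X])) = U.map C * D.map C * V.map C by
      rw [map_mulC, map_mulC]]
    have hscalar : Matrix.scalar n (X : ℂ[X]) = (X : ℂ[X]) • (1 : Matrix n n ℂ[X]) := by
      ext p q
      by_cases hpq : p = q <;>
        simp [Matrix.scalar, Matrix.diagonal_apply, Matrix.one_apply, hpq]
    rw [hscalar, Matrix.mul_sub, Matrix.sub_mul, Matrix.mul_smul, Matrix.mul_one,
      Matrix.smul_mul, hUV]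
  rw [hmap, Matrix.det_mul, Matrix.det_mul]
  have hdet : (U.map (C : ℂ → ℂ[X])).det * (V.map (C : ℂ → ℂ[X])).det = 1 := by
    rw [← Matrix.det_mul, hUV, Matrix.det_one]
  rw [mul_comm (U.map (C : ℂ → ℂ[X])).det (charmatrix D).det, mul_assoc, hdet, mul_one]

lemma charpoly_diag {n : Type*} [Fintype n] [DecidableEq n] (d : n → ℂ) :
    (Matrix.diagonal d).charpoly = ∏ p : n, (X - C (d p)) := by
  unfold Matrix.charpoly
  have : charmatrix (Matrix.diagonal d) = Matrix.diagonal (fun p => (X : ℂ[X]) - C (d p)) := by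
    ext p q
    by_cases hpq : p = q
    · subst hpq; simp
    · rw [charmatrix_apply_ne _ _ _ hpq, Matrix.diagonal_apply_ne _ hpq,
        Matrix.diagonal_apply_ne _ hpq]
      simp
  rw [this, Matrix.det_diagonal]


noncomputable def Ddiag (x : ℝ) : Matrix Q8 Q8 ℂ :=
  Matrix.diagonal (fun p => (1:ℂ)/8 + (sC * x / 4) * ((dz p : ℤ) : ℂ))

lemma hRU (x : ℝ) : rhoBisep x * Uc = Uc * Ddiag x := by
  rw [rep, Matrix.add_mul, Matrix.smul_mul, Matrix.smul_mul, Matrix.one_mul, hMU]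
  have hD : Ddiag x = ((1:ℂ)/8) • 1 + (sC * x / 4) • Matrix.diagonal (fun p => ((dz p : ℤ) : ℂ)) := by
    ext p q
    by_cases h : p = q <;>
      simp [Ddiag, Matrix.diagonal_apply, Matrix.one_apply, h]
  rw [hD, Matrix.mul_add, Matrix.mul_smul, Matrix.mul_one, Matrix.mul_smul]

lemma charpoly_rho (x : ℝ) :
    (rhoBisep x).charpoly =
      (X - C ((1 / 8 + Real.sqrt 2 * x : ℝ) : ℂ)) ^ 4 *
        (X - C ((1 / 8 - Real.sqrt 2 * x : ℝ) : ℂ)) ^ 4 := by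
  have hρ : rhoBisep x = Uc * Ddiag x * Wc := by
    calc rhoBisep x = rhoBisep x * (Uc * Wc) := by rw [hUW, Matrix.mul_one]
      _ = (rhoBisep x * Uc) * Wc := by rw [Matrix.mul_assoc]
      _ = Uc * Ddiag x * Wc := by rw [hRU]
  rw [hρ, charpoly_conj _ _ _ hUW, Ddiag, charpoly_diag]
  rw [Fintype.prod_prod_type]
  simp only [Fintype.prod_prod_type, Fin.prod_univ_two]
  have hplus : ((1 / 8 + Real.sqrt 2 * x : ℝ) : ℂ) = 1/8 + (sC * x / 4) * ((4:ℤ):ℂ) := by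
    push_cast [sC]; ring
  have hminus : ((1 / 8 - Real.sqrt 2 * x : ℝ) : ℂ) = 1/8 + (sC * x / 4) * ((-4:ℤ):ℂ) := by
    push_cast [sC]; ring
  rw [hplus, hminus]
  norm_num [dz, eQ]
  ring

noncomputable def Pp : Matrix Q8 Q8 ℂ := ((1:ℂ)/2) • 1 + ((1:ℂ)/8) • Mc
noncomputable def Pm : Matrix Q8 Q8 ℂ := ((1:ℂ)/2) • 1 - ((1:ℂ)/8) • Mc

lemma hPpH : Ppᴴ = Pp := by
  rw [Pp, Matrix.conjTranspose_add, Matrix.conjTranspose_smul, Matrix.conjTranspose_smul,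
    Matrix.conjTranspose_one, hMcH]
  norm_num
lemma hPmH : Pmᴴ = Pm := by
  rw [Pm, Matrix.conjTranspose_sub, Matrix.conjTranspose_smul, Matrix.conjTranspose_smul,
    Matrix.conjTranspose_one, hMcH]
  norm_num

lemma hPp2 : Pp * Pp = Pp := by
  rw [Pp]
  simp only [Matrix.add_mul, Matrix.mul_add, Matrix.smul_mul, Matrix.mul_smul, Matrix.one_mul,
    Matrix.mul_one, hM2]
  module
lemma hPm2 : Pm * Pm = Pm := by
  rw [Pm]
  simp only [Matrix.sub_mul, Matrix.mul_sub, Matrix.smul_mul, Matrix.mul_smul, Matrix.one_mul,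
    Matrix.mul_one, hM2]
  module

lemma hPpPSD : Pp.PosSemidef := by
  have : Pp = Ppᴴ * Pp := by rw [hPpH, hPp2]
  rw [this]; exact Matrix.posSemidef_conjTranspose_mul_self _
lemma hPmPSD : Pm.PosSemidef := by
  have : Pm = Pmᴴ * Pm := by rw [hPmH, hPm2]
  rw [this]; exact Matrix.posSemidef_conjTranspose_mul_self _

lemma psd_smul {P : Matrix Q8 Q8 ℂ} (h : P.PosSemidef) {r : ℝ} (hr : 0 ≤ r) :
    (((r:ℝ):ℂ) • P).PosSemidef := by
  rw [Matrix.posSemidef_iff_dotProduct_mulVec]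
  constructor
  · show (((r:ℝ):ℂ) • P)ᴴ = _
    rw [Matrix.conjTranspose_smul, h.1]
    congr 1
    simp
  · intro v
    rw [Matrix.smul_mulVec, dotProduct_smul, smul_eq_mul]
    exact mul_nonneg (Complex.zero_le_real.2 hr) (h.dotProduct_mulVec_nonneg v)

lemma rho_decomp (x : ℝ) :
    rhoBisep x = (((1/8 + Real.sqrt 2 * x : ℝ)):ℂ) • Pp + (((1/8 - Real.sqrt 2 * x : ℝ)):ℂ) • Pm := by
  rw [rep, Pp, Pm]
  push_cast
  rw [show ((Real.sqrt 2 : ℝ) : ℂ) = sC from rfl]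
  module

noncomputable def vpc : Q8 → ℂ := fun p => ((U8 (eQ p) 0 : ℤ) : ℂ)
noncomputable def vmc : Q8 → ℂ := fun p => ((U8 (eQ p) 5 : ℤ) : ℂ)

lemma hMvp : Mc *ᵥ vpc = (4:ℂ) • vpc := by
  have hz : Mz *ᵥ (fun p => U8 (eQ p) 0) = (4:ℤ) • (fun p => U8 (eQ p) 0) := by decide
  funext p
  have h := congrFun hz p
  simp only [Matrix.mulVec, dotProduct, Pi.smul_apply, smul_eq_mul] at h ⊢
  have lhs : ∑ q, Mc p q * vpc q = ((∑ q, Mz p q * U8 (eQ q) 0 : ℤ) : ℂ) := by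
    rw [Int.cast_sum]
    simp [Mc, vpc, Matrix.map_apply]
  rw [lhs, h]
  simp [vpc]
lemma hMvm : Mc *ᵥ vmc = (-4:ℂ) • vmc := by
  have hz : Mz *ᵥ (fun p => U8 (eQ p) 5) = (-4:ℤ) • (fun p => U8 (eQ p) 5) := by decide
  funext p
  have h := congrFun hz p
  simp only [Matrix.mulVec, dotProduct, Pi.smul_apply, smul_eq_mul] at h ⊢
  have lhs : ∑ q, Mc p q * vmc q = ((∑ q, Mz p q * U8 (eQ q) 5 : ℤ) : ℂ) := by
    rw [Int.cast_sum]
    simp [Mc, vmc, Matrix.map_apply]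
  rw [lhs, h]
  simp [vmc]

lemma hdotp : dotProduct (star vpc) vpc = 8 := by
  have hz : (∑ p, U8 (eQ p) 0 * U8 (eQ p) 0) = (8:ℤ) := by decide
  simp only [dotProduct, Pi.star_apply, vpc, star_intCast, ← Int.cast_mul]
  rw [← Int.cast_sum, hz]
  norm_num
lemma hdotm : dotProduct (star vmc) vmc = 6 := by
  have hz : (∑ p, U8 (eQ p) 5 * U8 (eQ p) 5) = (6:ℤ) := by decide
  simp only [dotProduct, Pi.star_apply, vmc, star_intCast, ← Int.cast_mul]
  rw [← Int.cast_sum, hz]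
  norm_num

lemma psd_iff (x : ℝ) :
    (rhoBisep x).PosSemidef ↔ -(1 / (8 * Real.sqrt 2)) ≤ x ∧ x ≤ 1 / (8 * Real.sqrt 2) := by
  have hs : (0:ℝ) < Real.sqrt 2 := Real.sqrt_pos.2 (by norm_num)
  constructor
  · intro hpsd
    have hqp := hpsd.dotProduct_mulVec_nonneg vpc
    have hqm := hpsd.dotProduct_mulVec_nonneg vmc
    have hrp : rhoBisep x *ᵥ vpc = (((1/8 + Real.sqrt 2 * x : ℝ)):ℂ) • vpc := by
      rw [rep, Matrix.add_mulVec, Matrix.smul_mulVec, Matrix.smul_mulVec,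
        Matrix.one_mulVec, hMvp, smul_smul, ← add_smul]
      congr 1
      push_cast [sC]
      ring
    have hrm : rhoBisep x *ᵥ vmc = (((1/8 - Real.sqrt 2 * x : ℝ)):ℂ) • vmc := by
      rw [rep, Matrix.add_mulVec, Matrix.smul_mulVec, Matrix.smul_mulVec,
        Matrix.one_mulVec, hMvm, smul_smul, ← add_smul]
      congr 1
      push_cast [sC]
      ring
    rw [hrp, dotProduct_smul, smul_eq_mul, hdotp] at hqp
    rw [hrm, dotProduct_smul, smul_eq_mul, hdotm] at hqm
    have hp' : (0:ℝ) ≤ (1/8 + Real.sqrt 2 * x) * 8 := by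
      have : ((((1/8 + Real.sqrt 2 * x) * 8 : ℝ)):ℂ) = (((1/8 + Real.sqrt 2 * x : ℝ)):ℂ) * 8 := by
        push_cast; ring
      exact Complex.zero_le_real.1 (this ▸ hqp)
    have hm' : (0:ℝ) ≤ (1/8 - Real.sqrt 2 * x) * 6 := by
      have : ((((1/8 - Real.sqrt 2 * x) * 6 : ℝ)):ℂ) = (((1/8 - Real.sqrt 2 * x : ℝ)):ℂ) * 6 := by
        push_cast; ring
      exact Complex.zero_le_real.1 (this ▸ hqm)
    constructor
    · rw [show -(1 / (8 * Real.sqrt 2)) = (-(1/8)) / Real.sqrt 2 by ring, div_le_iff₀ hs]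
      nlinarith
    · rw [show (1 / (8 * Real.sqrt 2)) = (1/8) / Real.sqrt 2 by ring, le_div_iff₀ hs]
      nlinarith
  · rintro ⟨h1, h2⟩
    have hp : (0:ℝ) ≤ 1/8 + Real.sqrt 2 * x := by
      rw [show -(1 / (8 * Real.sqrt 2)) = (-(1/8)) / Real.sqrt 2 by ring, div_le_iff₀ hs] at h1
      nlinarith
    have hm : (0:ℝ) ≤ 1/8 - Real.sqrt 2 * x := by
      rw [show (1 / (8 * Real.sqrt 2)) = (1/8) / Real.sqrt 2 by ring, le_div_iff₀ hs] at h2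
      nlinarith
    rw [rho_decomp]
    exact (psd_smul hPpPSD hp).add (psd_smul hPmPSD hm)

theorem stmt_16 (x : ℝ) :
    (rhoBisep x).IsHermitian ∧ (rhoBisep x).trace = 1 ∧
    (rhoBisep x * rhoBisep x).trace = 1 / 8 + (16 : ℂ) * (x : ℂ) ^ 2 ∧
    (rhoBisep x).charpoly =
      (X - C ((1 / 8 + Real.sqrt 2 * x : ℝ) : ℂ)) ^ 4 *
        (X - C ((1 / 8 - Real.sqrt 2 * x : ℝ) : ℂ)) ^ 4 ∧
    ((rhoBisep x).PosSemidef ↔ -(1 / (8 * Real.sqrt 2)) ≤ x ∧ x ≤ 1 / (8 * Real.sqrt 2)) ∧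
    PT1 (rhoBisep x) = rhoBisep x ∧ PT2 (rhoBisep x) = rhoBisep x ∧
    PT3 (rhoBisep x) = rhoBisep x ∧
    ((rhoBisep x).PosSemidef →
      (PT1 (rhoBisep x)).PosSemidef ∧ (PT2 (rhoBisep x)).PosSemidef ∧
        (PT3 (rhoBisep x)).PosSemidef) := by
  refine ⟨herm x, tr1 x, tr2 x, charpoly_rho x, psd_iff x, pt1_rho x, pt2_rho x, pt3_rho x, ?_⟩
  intro h
  rw [pt1_rho, pt2_rho, pt3_rho]
  exact ⟨h, h, h⟩
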